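/- Let ψ be three times differentiable with ψ' > 0 and w(φ) = sqrt(ψ''(φ)² + ψ'(φ)²(1+ψ'(φ))²) > 0. Define T̃(φ) = (ψ''(φ) − i·ψ'(φ)(1+ψ'(φ)))/w(φ) · exp(i·ψ(φ)). Then T̃'(φ) = i·h̃(φ)·T̃(φ), where h̃(φ) = (1+ψ'(φ))·[ψ'(φ)·(ψ'''(φ) + ψ'(φ)² + ψ'(φ)³) − ψ''(φ)²]/w(φ)². -/

import Mathlib

open Complex

theorem deriv_unit_tangent_driven
    (ψ ψ' ψ'' ψ''' : ℝ → ℝ)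
    (hd1 : ∀ t, HasDerivAt ψ (ψ' t) t)
    (hd2 : ∀ t, HasDerivAt ψ' (ψ'' t) t)
    (hd3 : ∀ t, HasDerivAt ψ'' (ψ''' t) t)
    (hpos : ∀ t, 0 < ψ' t)
    (w : ℝ → ℝ)
    (hw : ∀ t, w t = Real.sqrt ((ψ'' t) ^ 2 + (ψ' t) ^ 2 * (1 + ψ' t) ^ 2))
    (hwpos : ∀ t, 0 < w t)
    (T : ℝ → ℂ)
    (hT : ∀ t, T t =
      (((ψ'' t : ℂ) - Complex.I * (ψ' t : ℂ) * (1 + (ψ' t : ℂ))) / (w t : ℂ)) *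
        Complex.exp ((ψ t : ℂ) * Complex.I))
    (h : ℝ → ℝ)
    (hh : ∀ t, h t =
      (1 + ψ' t) * (ψ' t * (ψ''' t + (ψ' t) ^ 2 + (ψ' t) ^ 3) - (ψ'' t) ^ 2) / (w t) ^ 2)
    (φ : ℝ) :
    deriv T φ = Complex.I * (h φ : ℂ) * T φ := by
  have hgpos : ∀ t, 0 < (ψ'' t) ^ 2 + (ψ' t) ^ 2 * (1 + ψ' t) ^ 2 := by
    intro t
    nlinarith [sq_nonneg (ψ'' t), hpos t, sq_nonneg (ψ' t * (1 + ψ' t))]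
  -- derivative of g
  have hgder : HasDerivAt (fun t => (ψ'' t) ^ 2 + (ψ' t) ^ 2 * (1 + ψ' t) ^ 2)
      (2 * ψ'' φ * ψ''' φ + (2 * ψ' φ * ψ'' φ) * (1 + ψ' φ) ^ 2
        + (ψ' φ) ^ 2 * (2 * (1 + ψ' φ) * ψ'' φ)) φ := by
    have h1 := ((hd3 φ).pow 2)
    have h2 := ((hd2 φ).pow 2)
    have h3 := ((hd2 φ).const_add 1).pow 2
    have := h1.add (h2.mul h3)
    refine this.congr_deriv ?_
    simp only [Pi.pow_apply]
    ring
  -- derivative of w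
  have hwfun : w = fun t => Real.sqrt ((ψ'' t) ^ 2 + (ψ' t) ^ 2 * (1 + ψ' t) ^ 2) :=
    funext hw
  have hwder : HasDerivAt w
      ((2 * ψ'' φ * ψ''' φ + (2 * ψ' φ * ψ'' φ) * (1 + ψ' φ) ^ 2
        + (ψ' φ) ^ 2 * (2 * (1 + ψ' φ) * ψ'' φ)) / (2 * w φ)) φ := by
    have h0 := hgder.sqrt (ne_of_gt (hgpos φ))
    have h1 : HasDerivAt w
        ((2 * ψ'' φ * ψ''' φ + (2 * ψ' φ * ψ'' φ) * (1 + ψ' φ) ^ 2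
          + (ψ' φ) ^ 2 * (2 * (1 + ψ' φ) * ψ'' φ)) /
          (2 * Real.sqrt ((ψ'' φ) ^ 2 + (ψ' φ) ^ 2 * (1 + ψ' φ) ^ 2))) φ := by
      rw [hwfun]; exact h0
    rwa [← hw φ] at h1
  -- complex building blocks
  have hN : HasDerivAt (fun t => ((ψ'' t : ℂ) - Complex.I * (ψ' t : ℂ) * (1 + (ψ' t : ℂ))))
      ((ψ''' φ : ℂ) - Complex.I * ((ψ'' φ : ℂ) * (1 + (ψ' φ : ℂ)) + (ψ' φ : ℂ) * (ψ'' φ : ℂ))) φ := by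
    have h1 := (hd3 φ).ofReal_comp
    have h2 := (hd2 φ).ofReal_comp
    have h3 := ((hd2 φ).ofReal_comp.const_add (1:ℂ))
    have := h1.sub (((h2.const_mul Complex.I).mul h3))
    refine this.congr_deriv ?_
    ring
  have hwc : HasDerivAt (fun t => ((w t : ℝ) : ℂ))
      (((2 * ψ'' φ * ψ''' φ + (2 * ψ' φ * ψ'' φ) * (1 + ψ' φ) ^ 2
        + (ψ' φ) ^ 2 * (2 * (1 + ψ' φ) * ψ'' φ)) / (2 * w φ) : ℝ) : ℂ) φ :=
    hwder.ofReal_comp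
  have hwne : ((w φ : ℝ) : ℂ) ≠ 0 := by
    exact_mod_cast (ne_of_gt (hwpos φ))
  have hE : HasDerivAt (fun t => Complex.exp ((ψ t : ℂ) * Complex.I))
      (Complex.exp ((ψ φ : ℂ) * Complex.I) * ((ψ' φ : ℂ) * Complex.I)) φ :=
    ((hd1 φ).ofReal_comp.mul_const Complex.I).cexp
  have hdiv := hN.div hwc hwne
  have hTder := hdiv.mul hE
  have hTfun : T = fun t =>
      (((ψ'' t : ℂ) - Complex.I * (ψ' t : ℂ) * (1 + (ψ' t : ℂ))) / (w t : ℂ)) *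
        Complex.exp ((ψ t : ℂ) * Complex.I) := funext hT
  rw [hTfun]
  rw [HasDerivAt.deriv (f := fun t =>
      (((ψ'' t : ℂ) - Complex.I * (ψ' t : ℂ) * (1 + (ψ' t : ℂ))) / (w t : ℂ)) *
        Complex.exp ((ψ t : ℂ) * Complex.I)) hTder, hh]
  simp only [Pi.div_apply]
  have hW2 : ((w φ : ℝ) : ℂ) ^ 2 = ((ψ'' φ : ℂ)) ^ 2 + ((ψ' φ : ℂ)) ^ 2 * (1 + (ψ' φ : ℂ)) ^ 2 := by
    have : (w φ) ^ 2 = (ψ'' φ) ^ 2 + (ψ' φ) ^ 2 * (1 + ψ' φ) ^ 2 := by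
      rw [hw φ]
      exact Real.sq_sqrt (le_of_lt (hgpos φ))
    exact_mod_cast this
  have hgne : ((ψ'' φ : ℂ)) ^ 2 + ((ψ' φ : ℂ)) ^ 2 * (1 + (ψ' φ : ℂ)) ^ 2 ≠ 0 := by
    rw [← hW2]
    exact pow_ne_zero 2 hwne
  have hEne : Complex.exp ((ψ φ : ℂ) * Complex.I) ≠ 0 := Complex.exp_ne_zero _
  push_cast
  field_simp
  linear_combination ((ψ''' φ:ℂ) - Complex.I*(ψ'' φ:ℂ)*(1+2*(ψ' φ:ℂ)) + Complex.I*(ψ' φ:ℂ)*(ψ'' φ:ℂ) - Complex.I^2*(ψ' φ:ℂ)*((ψ' φ:ℂ)*(1+(ψ' φ:ℂ)))) * hW2 + (-(ψ' φ:ℂ)*((ψ' φ:ℂ)*(1+(ψ' φ:ℂ)))*((ψ'' φ:ℂ)^2+(ψ' φ:ℂ)^2*(1+(ψ' φ:ℂ))^2) + (1+(ψ' φ:ℂ))*((ψ' φ:ℂ)*(1+(ψ' φ:ℂ)))*((ψ' φ:ℂ)*(ψ''' φ:ℂ)+(ψ' φ:ℂ)^3+(ψ' φ:ℂ)^4-(ψ''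 φ:ℂ)^2)) * Complex.I_sq
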